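/- The set T_ℓ = {(T, T') ∈ T_ℓ^+ × T_0^- : α_T ≥ β_{T'} - 1} is closed under the Kashiwara crystal operators ẽ_i and f̃_i (with the tensor product rule): for every (T, T') ∈ T_ℓ and every i ∈ ℤ, the result of applying ẽ_i (or f̃_i) to T ⊗ T' via the tensor product rule is either 0 or again an element of T_ℓ. -/
import Mathlib


attribute [local instance] Classical.propDecidable

noncomputable section

/-- `T_ℓ^+`: strictly increasing integer sequences indexed by `j ≤ ℓ` with `i_j = j`
for `j ≪ 0`. -/
def TPlus (ℓ : ℤ) : Set (Set.Iic ℓ → ℤ) :=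
  {f | StrictMono f ∧ ∃ N : ℤ, ∀ j : Set.Iic ℓ, (j : ℤ) ≤ N → f j = (j : ℤ)}

/-- `T_0^-`: strictly increasing integer sequences indexed by `p ≥ 1` with `j_p = p`
for `p ≫ 0`. -/
def TMinus : Set (Set.Ici (1 : ℤ) → ℤ) :=
  {g | StrictMono g ∧ ∃ N : ℤ, ∀ p : Set.Ici (1 : ℤ), N ≤ (p : ℤ) → g p = (p : ℤ)}

/-- `α_T = sup {p ≤ ℓ : i_p = p}`. -/
def alphaT (ℓ : ℤ) (f : Set.Iic ℓ → ℤ) : ℤ :=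
  sSup {p : ℤ | ∃ h : p ≤ ℓ, f ⟨p, h⟩ = p}

/-- `β_{T'} = inf {p ≥ 1 : j_p = p}`. -/
def betaT (g : Set.Ici (1 : ℤ) → ℤ) : ℤ :=
  sInf {p : ℤ | ∃ h : (1 : ℤ) ≤ p, g ⟨p, h⟩ = p}

/-- `T_ℓ`: pairs `T ⊗ T'` with `T ∈ T_ℓ^+`, `T' ∈ T_0^-` and `α_T ≥ β_{T'} − 1`. -/
def TL (ℓ : ℤ) : Set ((Set.Iic ℓ → ℤ) × (Set.Ici (1 : ℤ) → ℤ)) :=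
  {x | x.1 ∈ TPlus ℓ ∧ x.2 ∈ TMinus ∧ betaT x.2 - 1 ≤ alphaT ℓ x.1}

/-- `T_{[1,ℓ]}`: strictly increasing `ℓ`-tuples of integers. -/
def TRect (ℓ : ℤ) : Set (Set.Icc (1 : ℤ) ℓ → ℤ) := {h | StrictMono h}

/-- The map `Π(T ⊗ T') = (j_1 < ⋯ < j_{α_T} < i_{α_T+1} < ⋯ < i_ℓ)`. -/
def PiMap (ℓ : ℤ) (x : (Set.Iic ℓ → ℤ) × (Set.Ici (1 : ℤ) → ℤ)) :
    Set.Icc (1 : ℤ) ℓ → ℤ :=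
  fun p => if (p : ℤ) ≤ alphaT ℓ x.1 then x.2 ⟨p, p.2.1⟩ else x.1 ⟨p, p.2.2⟩

/-- `ẽ_i` is applicable to a column: `i+1` occurs among the entries and `i` does not. -/
def eApp {γ : Type*} (i : ℤ) (f : γ → ℤ) : Prop :=
  (∃ p, f p = i + 1) ∧ ∀ p, f p ≠ i

/-- `f̃_i` is applicable to a column: `i` occurs among the entries and `i+1` does not. -/
def fApp {γ : Type*} (i : ℤ) (f : γ → ℤ) : Prop :=
  (∃ p, f p = i) ∧ ∀ p, f p ≠ i + 1

/-- Replace the entry `i+1` by `i`. -/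
def eMod {γ : Type*} (i : ℤ) (f : γ → ℤ) : γ → ℤ :=
  fun j => if f j = i + 1 then i else f j

/-- Replace the entry `i` by `i+1`. -/
def fMod {γ : Type*} (i : ℤ) (f : γ → ℤ) : γ → ℤ :=
  fun j => if f j = i then i + 1 else f j

/-- The Kashiwara operator `ẽ_i` on a column crystal, with value `none` for `0`. -/
def eCol {γ : Type*} (i : ℤ) (f : γ → ℤ) : Option (γ → ℤ) :=
  if eApp i f then some (eMod i f) else none

/-- The Kashiwara operator `f̃_i` on a column crystal, with value `none` for `0`. -/
def fCol {γ : Type*} (i : ℤ) (f : γ → ℤ) : Option (γ → ℤ) :=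
  if fApp i f then some (fMod i f) else none

/-- Kashiwara's tensor product rule for `ẽ_i` on `T ⊗ T'` (here `ε_i, φ_i ∈ {0,1}`
on each factor): `ẽ_i (b₁ ⊗ b₂) = ẽ_i b₁ ⊗ b₂` if `φ_i(b₁) ≥ ε_i(b₂)`, and
`b₁ ⊗ ẽ_i b₂` otherwise. -/
def eTen (ℓ : ℤ) (i : ℤ) (x : (Set.Iic ℓ → ℤ) × (Set.Ici (1 : ℤ) → ℤ)) :
    Option ((Set.Iic ℓ → ℤ) × (Set.Ici (1 : ℤ) → ℤ)) :=
  if fApp i x.1 ∨ ¬ eApp i x.2 then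
    (if eApp i x.1 then some (eMod i x.1, x.2) else none)
  else some (x.1, eMod i x.2)

/-- Kashiwara's tensor product rule for `f̃_i` on `T ⊗ T'`:
`f̃_i (b₁ ⊗ b₂) = f̃_i b₁ ⊗ b₂` if `φ_i(b₁) > ε_i(b₂)`, and `b₁ ⊗ f̃_i b₂` otherwise. -/
def fTen (ℓ : ℤ) (i : ℤ) (x : (Set.Iic ℓ → ℤ) × (Set.Ici (1 : ℤ) → ℤ)) :
    Option ((Set.Iic ℓ → ℤ) × (Set.Ici (1 : ℤ) → ℤ)) :=
  if fApp i x.1 ∧ ¬ eApp i x.2 then some (fMod i x.1, x.2)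
  else (if fApp i x.2 then some (x.1, fMod i x.2) else none)

/-! ### Auxiliary lemmas -/

private lemma gap_aux {S : Set ℤ} {f : S → ℤ} (hf : StrictMono f) :
    ∀ n : ℕ, ∀ a b : S, (∀ x : ℤ, (a : ℤ) ≤ x → x ≤ (b : ℤ) → x ∈ S) →
      (b : ℤ) = (a : ℤ) + n → (n : ℤ) ≤ f b - f a := by
  intro n
  induction n with
  | zero =>
    intro a b _ h
    have : a = b := Subtype.ext (by push_cast at h; omega)
    subst this; simp
  | succ n ih =>
    intro a b hS h
    have hh : (b : ℤ) = (a : ℤ) + n + 1 := by push_cast at h; omega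
    have hcS : ((a : ℤ) + n) ∈ S := hS _ (by omega) (by omega)
    have h1 : (n : ℤ) ≤ f ⟨(a : ℤ) + n, hcS⟩ - f a := by
      refine ih a ⟨(a : ℤ) + n, hcS⟩ (fun x hx1 hx2 => hS x hx1 ?_) rfl
      have hx2' : x ≤ (a : ℤ) + n := hx2
      omega
    have h2 : f ⟨(a : ℤ) + n, hcS⟩ < f b := by
      apply hf
      rw [← Subtype.coe_lt_coe]
      show (a : ℤ) + n < (b : ℤ)
      omega
    push_cast
    omega

private lemma gap_le {S : Set ℤ} {f : S → ℤ} (hf : StrictMono f) (a b : S)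
    (hS : ∀ x : ℤ, (a : ℤ) ≤ x → x ≤ (b : ℤ) → x ∈ S) (hab : (a : ℤ) ≤ (b : ℤ)) :
    (b : ℤ) - (a : ℤ) ≤ f b - f a := by
  have := gap_aux hf ((b : ℤ) - (a : ℤ)).toNat a b hS (by omega)
  omega

private lemma TPlus_le_apply {ℓ : ℤ} {f : Set.Iic ℓ → ℤ} (hf : f ∈ TPlus ℓ)
    (p : Set.Iic ℓ) : (p : ℤ) ≤ f p := by
  obtain ⟨hm, N, hN⟩ := hf
  have hp : (p : ℤ) ≤ ℓ := p.2
  have hmℓ : min N (p : ℤ) ∈ Set.Iic ℓ := by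
    simp only [Set.mem_Iic]; omega
  have h1 : f ⟨min N (p : ℤ), hmℓ⟩ = min N (p : ℤ) := hN _ (min_le_left _ _)
  have h2 := gap_le hm ⟨min N (p : ℤ), hmℓ⟩ p
    (fun x _ hx2 => Set.mem_Iic.mpr (by omega)) (min_le_right _ _)
  simp only at h2
  omega

private lemma TMinus_apply_le {g : Set.Ici (1 : ℤ) → ℤ} (hg : g ∈ TMinus)
    (p : Set.Ici (1 : ℤ)) : g p ≤ (p : ℤ) := by
  obtain ⟨hm, N, hN⟩ := hg
  have hp : (1 : ℤ) ≤ (p : ℤ) := p.2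
  have hmI : max N (p : ℤ) ∈ Set.Ici (1 : ℤ) := by
    simp only [Set.mem_Ici]; omega
  have h1 : g ⟨max N (p : ℤ), hmI⟩ = max N (p : ℤ) := hN _ (le_max_left _ _)
  have h2 := gap_le hm p ⟨max N (p : ℤ), hmI⟩
    (fun x hx1 _ => Set.mem_Ici.mpr (by omega)) (le_max_right _ _)
  simp only at h2
  omega

private lemma alphaT_spec {ℓ : ℤ} {f : Set.Iic ℓ → ℤ} (hf : f ∈ TPlus ℓ) :
    ∃ h : alphaT ℓ f ≤ ℓ, f ⟨alphaT ℓ f, h⟩ = alphaT ℓ f := by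
  have hne : {p : ℤ | ∃ h : p ≤ ℓ, f ⟨p, h⟩ = p}.Nonempty := by
    obtain ⟨hm, N, hN⟩ := hf
    exact ⟨min N ℓ, min_le_right _ _,
      hN ⟨min N ℓ, Set.mem_Iic.mpr (min_le_right _ _)⟩ (min_le_left _ _)⟩
  have hbdd : BddAbove {p : ℤ | ∃ h : p ≤ ℓ, f ⟨p, h⟩ = p} :=
    ⟨ℓ, fun _ hq => hq.choose⟩
  exact Int.csSup_mem hne hbdd

private lemma le_alphaT {ℓ : ℤ} {f : Set.Iic ℓ → ℤ} {p : ℤ} (h : p ≤ ℓ)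
    (hp : f ⟨p, h⟩ = p) : p ≤ alphaT ℓ f :=
  le_csSup ⟨ℓ, fun _ hq => hq.choose⟩ ⟨h, hp⟩

private lemma fix_of_le_alphaT {ℓ : ℤ} {f : Set.Iic ℓ → ℤ} (hf : f ∈ TPlus ℓ)
    {p : ℤ} (hpl : p ≤ ℓ) (hpa : p ≤ alphaT ℓ f) : f ⟨p, hpl⟩ = p := by
  obtain ⟨hα, hfα⟩ := alphaT_spec hf
  have h1 := TPlus_le_apply hf ⟨p, hpl⟩
  have h2 := gap_le hf.1 ⟨p, hpl⟩ ⟨alphaT ℓ f, hα⟩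
    (fun x _ hx2 => Set.mem_Iic.mpr (by simp only at hx2; omega))
    (by show p ≤ alphaT ℓ f; omega)
  simp only at h1 h2
  omega

private lemma betaT_spec {g : Set.Ici (1 : ℤ) → ℤ} (hg : g ∈ TMinus) :
    ∃ h : (1 : ℤ) ≤ betaT g, g ⟨betaT g, h⟩ = betaT g := by
  have hne : {p : ℤ | ∃ h : (1 : ℤ) ≤ p, g ⟨p, h⟩ = p}.Nonempty := by
    obtain ⟨hm, N, hN⟩ := hg
    exact ⟨max N 1, le_max_right _ _,
      hN ⟨max N 1, Set.mem_Ici.mpr (le_max_right _ _)⟩ (le_max_left _ _)⟩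
  have hbdd : BddBelow {p : ℤ | ∃ h : (1 : ℤ) ≤ p, g ⟨p, h⟩ = p} :=
    ⟨1, fun _ hq => hq.choose⟩
  exact Int.csInf_mem hne hbdd

private lemma betaT_le {g : Set.Ici (1 : ℤ) → ℤ} {p : ℤ} (h : (1 : ℤ) ≤ p)
    (hp : g ⟨p, h⟩ = p) : betaT g ≤ p :=
  csInf_le ⟨1, fun _ hq => hq.choose⟩ ⟨h, hp⟩

private lemma fix_of_betaT_le {g : Set.Ici (1 : ℤ) → ℤ} (hg : g ∈ TMinus)
    {p : ℤ} (hp1 : (1 : ℤ) ≤ p) (hpb : betaT g ≤ p) : g ⟨p, hp1⟩ = p := by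
  obtain ⟨hβ, hgβ⟩ := betaT_spec hg
  have h1 := TMinus_apply_le hg ⟨p, hp1⟩
  have h2 := gap_le hg.1 ⟨betaT g, hβ⟩ ⟨p, hp1⟩
    (fun x hx1 _ => Set.mem_Ici.mpr (by simp only at hx1; omega))
    (by show betaT g ≤ p; omega)
  simp only at h1 h2
  omega

private lemma eMod_strictMono {γ : Type*} [Preorder γ] {i : ℤ} {f : γ → ℤ}
    (hm : StrictMono f) (h : ∀ p, f p ≠ i) : StrictMono (eMod i f) := by
  intro a b hab
  have hfab := hm hab
  have ha' := h a
  have hb' := h b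
  unfold eMod
  split_ifs <;> omega

private lemma fMod_strictMono {γ : Type*} [Preorder γ] {i : ℤ} {f : γ → ℤ}
    (hm : StrictMono f) (h : ∀ p, f p ≠ i + 1) : StrictMono (fMod i f) := by
  intro a b hab
  have hfab := hm hab
  have ha' := h a
  have hb' := h b
  unfold fMod
  split_ifs <;> omega

private lemma eMod_mem_TPlus {ℓ i : ℤ} {f : Set.Iic ℓ → ℤ} (hf : f ∈ TPlus ℓ)
    (h : ∀ p, f p ≠ i) : eMod i f ∈ TPlus ℓ := by
  obtain ⟨hm, N, hN⟩ := hf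
  refine ⟨eMod_strictMono hm h, min N (i - 1), fun j hj => ?_⟩
  have := hN j (by omega)
  unfold eMod
  split_ifs <;> omega

private lemma fMod_mem_TPlus {ℓ i : ℤ} {f : Set.Iic ℓ → ℤ} (hf : f ∈ TPlus ℓ)
    (h : ∀ p, f p ≠ i + 1) : fMod i f ∈ TPlus ℓ := by
  obtain ⟨hm, N, hN⟩ := hf
  refine ⟨fMod_strictMono hm h, min N (i - 1), fun j hj => ?_⟩
  have := hN j (by omega)
  unfold fMod
  split_ifs <;> omega

private lemma eMod_mem_TMinus {i : ℤ} {g : Set.Ici (1 : ℤ) → ℤ} (hg : g ∈ TMinus)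
    (h : ∀ p, g p ≠ i) : eMod i g ∈ TMinus := by
  obtain ⟨hm, N, hN⟩ := hg
  refine ⟨eMod_strictMono hm h, max N (i + 2), fun j hj => ?_⟩
  have := hN j (by omega)
  unfold eMod
  split_ifs <;> omega

private lemma fMod_mem_TMinus {i : ℤ} {g : Set.Ici (1 : ℤ) → ℤ} (hg : g ∈ TMinus)
    (h : ∀ p, g p ≠ i + 1) : fMod i g ∈ TMinus := by
  obtain ⟨hm, N, hN⟩ := hg
  refine ⟨fMod_strictMono hm h, max N (i + 2), fun j hj => ?_⟩
  have := hN j (by omega)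
  unfold fMod
  split_ifs <;> omega

/-- The set `T_ℓ = {(T,T') : α_T ≥ β_{T'} − 1}` is closed under the Kashiwara
crystal operators `ẽ_i` and `f̃_i` given by the tensor product rule: applying
them to an element of `T_ℓ` gives either `0` or again an element of `T_ℓ`. -/
theorem TL_closed_under_crystal_ops (ℓ : ℤ) (hl : 1 ≤ ℓ) :
    ∀ x ∈ TL ℓ, ∀ i : ℤ, ∀ y,
      (eTen ℓ i x = some y → y ∈ TL ℓ) ∧ (fTen ℓ i x = some y → y ∈ TL ℓ) := by
  rintro ⟨f, g⟩ hx i y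
  obtain ⟨hf, hg, hab⟩ := hx
  replace hf : f ∈ TPlus ℓ := hf
  replace hg : g ∈ TMinus := hg
  replace hab : betaT g - 1 ≤ alphaT ℓ f := hab
  obtain ⟨hα, hfα⟩ := alphaT_spec hf
  obtain ⟨hβ, hgβ⟩ := betaT_spec hg
  constructor
  · -- the `ẽ_i` case
    intro hy
    unfold eTen at hy
    dsimp only at hy
    by_cases h1 : fApp i f ∨ ¬ eApp i g
    rotate_left
    · -- `ẽ_i` acts on the second factor
      rw [if_neg h1] at hy
      push_neg at h1
      obtain ⟨hnf, heg⟩ := h1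
      simp only [Option.some.injEq] at hy
      subst hy
      refine ⟨hf, eMod_mem_TMinus hg heg.2,
        show betaT (eMod i g) - 1 ≤ alphaT ℓ f from ?_⟩
      by_cases hiβ : i + 1 = betaT g
      · -- the modified entry is at position `β`; then `β ≤ α` must hold
        have hβα : betaT g ≤ alphaT ℓ f := by
          by_contra hcon
          push_neg at hcon
          apply hnf
          constructor
          · exact ⟨⟨alphaT ℓ f, hα⟩, by omega⟩
          · intro p hp
            have hple := TPlus_le_apply hf p
            have hp2 : (p : ℤ) ≤ ℓ := p.2
            have hcoe : f ⟨(p : ℤ), hp2⟩ = f p := congrArg f (Subtype.eta p hp2)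
            rcases le_or_gt (p : ℤ) (alphaT ℓ f) with hle | hlt
            · have := fix_of_le_alphaT hf hp2 hle
              omega
            · have : (p : ℤ) ≤ alphaT ℓ f := le_alphaT hp2 (by omega)
              omega
        have hb1 : (1 : ℤ) ≤ betaT g + 1 := by omega
        have hfx := fix_of_betaT_le hg hb1 (by omega)
        have hfix : eMod i g ⟨betaT g + 1, hb1⟩ = betaT g + 1 := by
          unfold eMod; split_ifs <;> omega
        have := betaT_le hb1 hfix
        omega
      · -- `β` is still a fixed point
        have hfix : eMod i g ⟨betaT g, hβ⟩ = betaT g := by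
          unfold eMod; split_ifs <;> omega
        have := betaT_le hβ hfix
        omega
    rw [if_pos h1] at hy
    by_cases h2 : eApp i f
    rotate_left
    · rw [if_neg h2] at hy
      exact absurd hy (by simp)
    · -- `ẽ_i` acts on the first factor
      rw [if_pos h2] at hy
      simp only [Option.some.injEq] at hy
      subst hy
      obtain ⟨-, hnoti⟩ := h2
      refine ⟨eMod_mem_TPlus hf hnoti, hg,
        show betaT g - 1 ≤ alphaT ℓ (eMod i f) from ?_⟩
      have hαne : alphaT ℓ f ≠ i + 1 := by
        intro hcon
        have h1' : alphaT ℓ f - 1 ≤ ℓ := by omega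
        have h2' := fix_of_le_alphaT hf h1' (by omega)
        exact hnoti ⟨alphaT ℓ f - 1, h1'⟩ (by omega)
      have hfix : eMod i f ⟨alphaT ℓ f, hα⟩ = alphaT ℓ f := by
        unfold eMod; split_ifs <;> omega
      have := le_alphaT hα hfix
      omega

  · -- the `f̃_i` case
    intro hy
    unfold fTen at hy
    dsimp only at hy
    by_cases h1 : fApp i f ∧ ¬ eApp i g
    rotate_left
    · rw [if_neg h1] at hy
      by_cases h2 : fApp i g
      rotate_left
      · rw [if_neg h2] at hy
        exact absurd hy (by simp)
      · -- `f̃_i` acts on the second factor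
        rw [if_pos h2] at hy
        simp only [Option.some.injEq] at hy
        subst hy
        refine ⟨hf, fMod_mem_TMinus hg h2.2,
          show betaT (fMod i g) - 1 ≤ alphaT ℓ f from ?_⟩
        have hb1 : (1 : ℤ) ≤ betaT g + 1 := by omega
        have hiβ : i ≠ betaT g := by
          intro hcon
          have hfx := fix_of_betaT_le hg hb1 (by omega)
          exact h2.2 ⟨betaT g + 1, hb1⟩ (by omega)
        have hfix : fMod i g ⟨betaT g, hβ⟩ = betaT g := by
          unfold fMod; split_ifs <;> omega
        have := betaT_le hβ hfix
        omega
    · -- `f̃_i` acts on the first factor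
      rw [if_pos h1] at hy
      simp only [Option.some.injEq] at hy
      subst hy
      obtain ⟨hof, hneg⟩ := h1
      refine ⟨fMod_mem_TPlus hf hof.2, hg,
        show betaT g - 1 ≤ alphaT ℓ (fMod i f) from ?_⟩
      by_cases hiα : i = alphaT ℓ f
      · -- the modified entry is at position `α`; then `β ≤ α` must hold
        have hβα : betaT g ≤ alphaT ℓ f := by
          by_contra hcon
          push_neg at hcon
          apply hneg
          constructor
          · exact ⟨⟨betaT g, hβ⟩, by omega⟩
          · intro p hp
            have hple := TMinus_apply_le hg p
            have hp2 : (1 : ℤ) ≤ (p : ℤ) := p.2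
            have hcoe : g ⟨(p : ℤ), hp2⟩ = g p := congrArg g (Subtype.eta p hp2)
            rcases le_or_gt (betaT g) (p : ℤ) with hle | hlt
            · have := fix_of_betaT_le hg hp2 hle
              omega
            · have : betaT g ≤ (p : ℤ) := betaT_le hp2 (by omega)
              omega
        have ha1 : alphaT ℓ f - 1 ≤ ℓ := by omega
        have hfx := fix_of_le_alphaT hf ha1 (by omega)
        have hfix : fMod i f ⟨alphaT ℓ f - 1, ha1⟩ = alphaT ℓ f - 1 := by
          unfold fMod; split_ifs <;> omega
        have := le_alphaT ha1 hfix
        omega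
      · -- `α` is still a fixed point
        have hfix : fMod i f ⟨alphaT ℓ f, hα⟩ = alphaT ℓ f := by
          unfold fMod; split_ifs <;> omega
        have := le_alphaT hα hfix
        omega
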